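/- For the group G₀ = {g ∈ SL(3,ℂ) : g₁₃ = g₂₃ = 0, g₃₃ = 1} and U₀ = G₀ ∩ U (U upper unitriangular), the map g ↦ (p(g), q(g)) (first column and cofactor vector of the first two columns) induces a bijection G₀/U₀ ≅ {(p,q) ∈ ℂ³×ℂ³ : p ≠ 0, q₃ = 1, p·q = 0}. -/

import Mathlib

open Matrix

/-- The subgroup G₀ = SL(2,ℂ) ⋉ ℂ² of SL(3,ℂ): matrices with last column (0,0,1)ᵗ. -/
def G0 : Set (Matrix.SpecialLinearGroup (Fin 3) ℂ) :=
  {g | (g : Matrix (Fin 3) (Fin 3) ℂ) 0 2 = 0 ∧ (g : Matrix (Fin 3) (Fin 3) ℂ) 1 2 = 0 ∧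
       (g : Matrix (Fin 3) (Fin 3) ℂ) 2 2 = 1}

/-- U₀ = G₀ ∩ U: upper unitriangular matrices of the form [[1,b,0],[0,1,0],[0,0,1]]. -/
def U0 : Set (Matrix.SpecialLinearGroup (Fin 3) ℂ) :=
  {u | (u : Matrix (Fin 3) (Fin 3) ℂ) 0 0 = 1 ∧ (u : Matrix (Fin 3) (Fin 3) ℂ) 1 1 = 1 ∧
       (u : Matrix (Fin 3) (Fin 3) ℂ) 2 2 = 1 ∧ (u : Matrix (Fin 3) (Fin 3) ℂ) 1 0 = 0 ∧
       (u : Matrix (Fin 3) (Fin 3) ℂ) 2 0 = 0 ∧ (u : Matrix (Fin 3) (Fin 3) ℂ) 2 1 = 0 ∧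
       (u : Matrix (Fin 3) (Fin 3) ℂ) 0 2 = 0 ∧ (u : Matrix (Fin 3) (Fin 3) ℂ) 1 2 = 0}

/-- First column of g. -/
def pVec (g : Matrix.SpecialLinearGroup (Fin 3) ℂ) : Fin 3 → ℂ :=
  fun i => (g : Matrix (Fin 3) (Fin 3) ℂ) i 0

/-- Cofactor vector of the first two columns of g. -/
def qVec (g : Matrix.SpecialLinearGroup (Fin 3) ℂ) : Fin 3 → ℂ :=
  ![(g : Matrix (Fin 3) (Fin 3) ℂ) 1 0 * (g : Matrix (Fin 3) (Fin 3) ℂ) 2 1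
      - (g : Matrix (Fin 3) (Fin 3) ℂ) 2 0 * (g : Matrix (Fin 3) (Fin 3) ℂ) 1 1,
    (g : Matrix (Fin 3) (Fin 3) ℂ) 2 0 * (g : Matrix (Fin 3) (Fin 3) ℂ) 0 1
      - (g : Matrix (Fin 3) (Fin 3) ℂ) 0 0 * (g : Matrix (Fin 3) (Fin 3) ℂ) 2 1,
    (g : Matrix (Fin 3) (Fin 3) ℂ) 0 0 * (g : Matrix (Fin 3) (Fin 3) ℂ) 1 1
      - (g : Matrix (Fin 3) (Fin 3) ℂ) 1 0 * (g : Matrix (Fin 3) (Fin 3) ℂ) 0 1]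

lemma G0_key {g : Matrix.SpecialLinearGroup (Fin 3) ℂ} (hg : g ∈ G0) :
    (g : Matrix (Fin 3) (Fin 3) ℂ) 0 0 * (g : Matrix (Fin 3) (Fin 3) ℂ) 1 1
      - (g : Matrix (Fin 3) (Fin 3) ℂ) 1 0 * (g : Matrix (Fin 3) (Fin 3) ℂ) 0 1 = 1 := by
  obtain ⟨h02, h12, h22⟩ := hg
  have hdet := g.2
  rw [Matrix.det_fin_three] at hdet
  rw [h02, h12, h22] at hdet
  linear_combination hdet

lemma findU (g g' : Matrix.SpecialLinearGroup (Fin 3) ℂ)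
    (hg : g ∈ G0) (hg' : g' ∈ G0) (b : ℂ)
    (h0 : ∀ i, (g' : Matrix (Fin 3) (Fin 3) ℂ) i 0 = (g : Matrix (Fin 3) (Fin 3) ℂ) i 0)
    (h1 : ∀ i, (g' : Matrix (Fin 3) (Fin 3) ℂ) i 1
        = (g : Matrix (Fin 3) (Fin 3) ℂ) i 1 + b * (g : Matrix (Fin 3) (Fin 3) ℂ) i 0) :
    ∃ u ∈ U0, g' = g * u := by
  obtain ⟨g02, g12, g22⟩ := hg
  obtain ⟨g02', g12', g22'⟩ := hg'
  refine ⟨⟨!![1, b, 0; 0, 1, 0; 0, 0, 1], by rw [Matrix.det_fin_three]; simp [Matrix.vecHead, Matrix.vecTail]⟩,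
    ⟨by simp, by simp [Matrix.vecHead, Matrix.vecTail], by simp [Matrix.vecHead, Matrix.vecTail], by simp, by simp [Matrix.vecHead, Matrix.vecTail], by simp [Matrix.vecHead, Matrix.vecTail], by simp [Matrix.vecHead, Matrix.vecTail], by simp [Matrix.vecHead, Matrix.vecTail]⟩, ?_⟩
  apply Matrix.SpecialLinearGroup.ext
  intro i j
  show (g' : Matrix (Fin 3) (Fin 3) ℂ) i j = ((g : Matrix (Fin 3) (Fin 3) ℂ) * !![1, b, 0; 0, 1, 0; 0, 0, 1]) i j
  simp only [Matrix.SpecialLinearGroup.coe_mul, Matrix.mul_apply, Fin.sum_univ_three]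
  fin_cases i <;> fin_cases j <;>
    simp [Matrix.vecHead, Matrix.vecTail, h0 0, h0 1, h0 2, h1 0, h1 1, h1 2, g02, g12, g22, g02', g12', g22'] <;> ring

/-- g ↦ (p(g),q(g)) induces a bijection
G₀/U₀ ≅ {(p,q) : p ≠ 0, q₃ = 1, p·q = 0}: it maps G₀ onto that set, and two
elements of G₀ have the same image iff they differ by right multiplication by
an element of U₀. -/
theorem G0_mod_U0_description :
    ((fun g => (pVec g, qVec g)) '' G0 =
      {pq : (Fin 3 → ℂ) × (Fin 3 → ℂ) | pq.1 ≠ 0 ∧ pq.2 2 = 1 ∧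
        pq.1 0 * pq.2 0 + pq.1 1 * pq.2 1 + pq.1 2 * pq.2 2 = 0}) ∧
    ∀ g ∈ G0, ∀ g' ∈ G0,
      ((pVec g, qVec g) = (pVec g', qVec g') ↔ ∃ u ∈ U0, g' = g * u) := by
  constructor
  · ext pq
    obtain ⟨p, q⟩ := pq
    simp only [Set.mem_image, Set.mem_setOf_eq]
    constructor
    · rintro ⟨g, hg, hgeq⟩
      have key := G0_key hg
      have hpeq : pVec g = p := congrArg Prod.fst hgeq
      have hqeq : qVec g = q := congrArg Prod.snd hgeq
      subst hpeq hqeq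
      refine ⟨?_, ?_, ?_⟩
      · intro h
        have h0 : (g : Matrix (Fin 3) (Fin 3) ℂ) 0 0 = 0 := congrFun h 0
        have h1 : (g : Matrix (Fin 3) (Fin 3) ℂ) 1 0 = 0 := congrFun h 1
        rw [h0, h1] at key
        simp at key
      · simpa [qVec] using key
      · simp only [pVec, qVec]
        simp only [Matrix.cons_val_zero, Matrix.cons_val_one, Matrix.head_cons,
          Matrix.cons_val_two, Matrix.tail_cons]
        ring
    · rintro ⟨hp, hq2, hdot⟩
      rw [hq2] at hdot
      by_cases h0 : p 0 ≠ 0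
      · refine ⟨⟨!![p 0, 0, 0; p 1, 1/p 0, 0; p 2, -(q 1)/p 0, 1],
          by rw [Matrix.det_fin_three]; simp; field_simp⟩, ⟨by simp, by simp, by simp⟩, ?_⟩
        rw [Prod.mk.injEq]
        constructor
        · funext i; fin_cases i <;> simp [pVec]
        · funext i
          fin_cases i
          · simp only [qVec]; simp; field_simp; linear_combination -hdot
          · simp only [qVec]; simp; field_simp
          · simp only [qVec]; simp [hq2]; field_simp
      · push_neg at h0
        by_cases h1 : p 1 ≠ 0
        · refine ⟨⟨!![p 0, -1/p 1, 0; p 1, 0, 0; p 2, q 0/p 1, 1],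
            by rw [Matrix.det_fin_three]; simp; field_simp⟩, ⟨by simp, by simp, by simp⟩, ?_⟩
          rw [Prod.mk.injEq]
          constructor
          · funext i; fin_cases i <;> simp [pVec]
          · funext i
            fin_cases i
            · simp only [qVec]; simp; field_simp
            · simp only [qVec]; simp [h0]; field_simp; linear_combination -hdot + q 0 * h0
            · simp only [qVec]; simp [h0, hq2]; field_simp
        · push_neg at h1
          exfalso
          apply hp
          have h2 : p 2 = 0 := by rw [h0, h1] at hdot; linear_combination hdot
          funext i; fin_cases i <;> simpa
  · rintro g hg g' hg'
    have key := G0_key hg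
    constructor
    · intro h
      have hp : pVec g = pVec g' := congrArg Prod.fst h
      have hq : qVec g = qVec g' := congrArg Prod.snd h
      have hp0 : (g : Matrix (Fin 3) (Fin 3) ℂ) 0 0 = (g' : Matrix (Fin 3) (Fin 3) ℂ) 0 0 :=
        congrFun hp 0
      have hp1 : (g : Matrix (Fin 3) (Fin 3) ℂ) 1 0 = (g' : Matrix (Fin 3) (Fin 3) ℂ) 1 0 :=
        congrFun hp 1
      have hp2 : (g : Matrix (Fin 3) (Fin 3) ℂ) 2 0 = (g' : Matrix (Fin 3) (Fin 3) ℂ) 2 0 :=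
        congrFun hp 2
      have hq0 := congrFun hq 0
      have hq1 := congrFun hq 1
      have hq2 := congrFun hq 2
      simp only [qVec, Matrix.cons_val_zero, Matrix.cons_val_one, Matrix.head_cons,
        Matrix.cons_val_two, Matrix.tail_cons] at hq0 hq1 hq2
      simp only [← hp0, ← hp1, ← hp2] at hq0 hq1 hq2
      have h0 : ∀ i, (g' : Matrix (Fin 3) (Fin 3) ℂ) i 0 = (g : Matrix (Fin 3) (Fin 3) ℂ) i 0 := by
        intro i; fin_cases i <;> simp [← hp0, ← hp1, ← hp2]
      by_cases hx0 : (g : Matrix (Fin 3) (Fin 3) ℂ) 0 0 ≠ 0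
      · refine findU g g' hg hg'
          (((g' : Matrix (Fin 3) (Fin 3) ℂ) 0 1 - (g : Matrix (Fin 3) (Fin 3) ℂ) 0 1)
            / (g : Matrix (Fin 3) (Fin 3) ℂ) 0 0) h0 ?_
        have e0 : (g' : Matrix (Fin 3) (Fin 3) ℂ) 0 1 = (g : Matrix (Fin 3) (Fin 3) ℂ) 0 1
            + ((g' : Matrix (Fin 3) (Fin 3) ℂ) 0 1 - (g : Matrix (Fin 3) (Fin 3) ℂ) 0 1)
              / (g : Matrix (Fin 3) (Fin 3) ℂ) 0 0 * (g : Matrix (Fin 3) (Fin 3) ℂ) 0 0 := by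
          field_simp; ring
        have e1 : (g' : Matrix (Fin 3) (Fin 3) ℂ) 1 1 = (g : Matrix (Fin 3) (Fin 3) ℂ) 1 1
            + ((g' : Matrix (Fin 3) (Fin 3) ℂ) 0 1 - (g : Matrix (Fin 3) (Fin 3) ℂ) 0 1)
              / (g : Matrix (Fin 3) (Fin 3) ℂ) 0 0 * (g : Matrix (Fin 3) (Fin 3) ℂ) 1 0 := by
          field_simp; linear_combination -hq2
        have e2 : (g' : Matrix (Fin 3) (Fin 3) ℂ) 2 1 = (g : Matrix (Fin 3) (Fin 3) ℂ) 2 1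
            + ((g' : Matrix (Fin 3) (Fin 3) ℂ) 0 1 - (g : Matrix (Fin 3) (Fin 3) ℂ) 0 1)
              / (g : Matrix (Fin 3) (Fin 3) ℂ) 0 0 * (g : Matrix (Fin 3) (Fin 3) ℂ) 2 0 := by
          field_simp; linear_combination hq1
        intro i; fin_cases i
        · exact e0
        · exact e1
        · exact e2
      · push_neg at hx0
        by_cases hx1 : (g : Matrix (Fin 3) (Fin 3) ℂ) 1 0 ≠ 0
        · refine findU g g' hg hg'
            (((g' : Matrix (Fin 3) (Fin 3) ℂ) 1 1 - (g : Matrix (Fin 3) (Fin 3) ℂ) 1 1)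
              / (g : Matrix (Fin 3) (Fin 3) ℂ) 1 0) h0 ?_
          have e0 : (g' : Matrix (Fin 3) (Fin 3) ℂ) 0 1 = (g : Matrix (Fin 3) (Fin 3) ℂ) 0 1
              + ((g' : Matrix (Fin 3) (Fin 3) ℂ) 1 1 - (g : Matrix (Fin 3) (Fin 3) ℂ) 1 1)
                / (g : Matrix (Fin 3) (Fin 3) ℂ) 1 0 * (g : Matrix (Fin 3) (Fin 3) ℂ) 0 0 := by
            field_simp; linear_combination hq2
          have e1 : (g' : Matrix (Fin 3) (Fin 3) ℂ) 1 1 = (g : Matrix (Fin 3) (Fin 3) ℂ) 1 1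
              + ((g' : Matrix (Fin 3) (Fin 3) ℂ) 1 1 - (g : Matrix (Fin 3) (Fin 3) ℂ) 1 1)
                / (g : Matrix (Fin 3) (Fin 3) ℂ) 1 0 * (g : Matrix (Fin 3) (Fin 3) ℂ) 1 0 := by
            field_simp; ring
          have e2 : (g' : Matrix (Fin 3) (Fin 3) ℂ) 2 1 = (g : Matrix (Fin 3) (Fin 3) ℂ) 2 1
              + ((g' : Matrix (Fin 3) (Fin 3) ℂ) 1 1 - (g : Matrix (Fin 3) (Fin 3) ℂ) 1 1)
                / (g : Matrix (Fin 3) (Fin 3) ℂ) 1 0 * (g : Matrix (Fin 3) (Fin 3) ℂ) 2 0 := by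
            field_simp; linear_combination -hq0
          intro i; fin_cases i
          · exact e0
          · exact e1
          · exact e2
        · push_neg at hx1
          exfalso
          rw [hx0, hx1] at key
          simp at key
    · rintro ⟨u, ⟨u00, u11, u22, u10, u20, u21, u02, u12⟩, rfl⟩
      rw [Prod.mk.injEq]
      constructor <;> funext i <;> fin_cases i <;>
        simp [pVec, qVec, Matrix.SpecialLinearGroup.coe_mul, Matrix.mul_apply,
          Fin.sum_univ_three, u00, u11, u22, u10, u20, u21, u02, u12] <;> ring
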